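/- Let K^{BTBM}_t(x) = 2 ∫_0^∞ (2πs)^{-d/2} e^{-|x|²/(2s)} · (2πt)^{-1/2} e^{-s²/(2t)} ds be the Brownian-time Brownian motion density. Then for 1 ≤ d ≤ 3 there is a constant C_d > 0 such that ∫_{ℝ^d} [K^{BTBM}_t(x)]² dx = C_d · t^{-d/4} for all t > 0; moreover for d ≥ 4 the integral ∫_{ℝ^d} [K^{BTBM}_t(x)]² dx is infinite. -/

import Mathlib

open MeasureTheory Real Set

noncomputable def heatK (d : ℕ) (s : ℝ) (x : EuclideanSpace ℝ (Fin d)) : ℝ :=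
  (2 * π * s) ^ (-(d : ℝ) / 2) * Real.exp (-‖x‖ ^ 2 / (2 * s))

noncomputable def btbmK (d : ℕ) (t : ℝ) (x : EuclideanSpace ℝ (Fin d)) : ℝ :=
  2 * ∫ s in Set.Ioi (0 : ℝ),
    heatK d s x * ((2 * π * t) ^ (-(1 : ℝ) / 2) * Real.exp (-s ^ 2 / (2 * t)))

namespace BTBM

noncomputable def gK (t s : ℝ) : ℝ := (2 * π * t) ^ (-(1:ℝ)/2) * Real.exp (-s ^ 2 / (2 * t))

lemma btbmK_eq (d : ℕ) (t : ℝ) (x : EuclideanSpace ℝ (Fin d)) :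
    btbmK d t x = 2 * ∫ s in Set.Ioi (0:ℝ), heatK d s x * gK t s := rfl

lemma gK_pos {t : ℝ} (ht : 0 < t) (s : ℝ) : 0 < gK t s := by
  unfold gK; positivity

lemma heatK_pos (d : ℕ) {s : ℝ} (hs : 0 < s) (x : EuclideanSpace ℝ (Fin d)) :
    0 < heatK d s x := by unfold heatK; positivity

lemma measurable_heatK (d : ℕ) :
    Measurable (fun p : ℝ × EuclideanSpace ℝ (Fin d) => heatK d p.1 p.2) := by
  unfold heatK; fun_prop

lemma measurable_gK (t : ℝ) : Measurable (gK t) := by unfold gK; fun_prop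

lemma measurable_heatK_gK (d : ℕ) (t : ℝ) :
    Measurable (fun p : ℝ × EuclideanSpace ℝ (Fin d) => heatK d p.1 p.2 * gK t p.1) :=
  (measurable_heatK d).mul ((measurable_gK t).comp measurable_fst)

end BTBM

namespace BTBM2
open BTBM

lemma exp_neg_le {a : ℝ} (ha : 0 < a) (n : ℕ) : Real.exp (-a) ≤ n.factorial / a ^ n := by
  have h : a ^ n / n.factorial ≤ Real.exp a := Real.pow_div_factorial_le_exp a ha.le n
  rw [div_le_iff₀ (by positivity)] at h
  rw [Real.exp_neg, inv_eq_one_div, div_le_div_iff₀ (Real.exp_pos a) (by positivity)]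
  nlinarith

lemma heatK_nonneg (d : ℕ) {s : ℝ} (hs : 0 ≤ s) (x : EuclideanSpace ℝ (Fin d)) :
    0 ≤ heatK d s x := by unfold heatK; positivity

lemma gK_nonneg {t : ℝ} (ht : 0 < t) (s : ℝ) : 0 ≤ gK t s := (gK_pos ht s).le

lemma integrableOn_s (d : ℕ) {t : ℝ} (ht : 0 < t) {x : EuclideanSpace ℝ (Fin d)} (hx : x ≠ 0) :
    IntegrableOn (fun s => heatK d s x * gK t s) (Set.Ioi (0:ℝ)) := by
  have hr : 0 < ‖x‖ := norm_pos_iff.2 hx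
  set e : ℝ := -(d:ℝ)/2 with he
  rw [show Set.Ioi (0:ℝ) = Set.Ioc 0 1 ∪ Set.Ioi 1 from (Set.Ioc_union_Ioi_eq_Ioi zero_le_one).symm]
  have hmble : Measurable (fun s => heatK d s x * gK t s) := by
    unfold heatK gK; fun_prop
  apply MeasureTheory.IntegrableOn.union
  · apply Measure.integrableOn_of_bounded
      (M := (2*π)^e * (2^d * d.factorial / ‖x‖^(2*d)) * (2*π*t)^(-(1:ℝ)/2))
    · exact (measure_Ioc_lt_top).ne
    · exact hmble.aestronglyMeasurable
    · filter_upwards [ae_restrict_mem measurableSet_Ioc] with s hs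
      have hs0 : 0 < s := hs.1
      have h1 : Real.exp (-‖x‖ ^ 2 / (2*s)) ≤ d.factorial * (2*s)^d / ‖x‖^(2*d) := by
        have ha : 0 < ‖x‖^2 / (2*s) := by positivity
        have h2 := exp_neg_le ha d
        rw [neg_div]
        refine h2.trans (le_of_eq ?_)
        rw [div_pow, div_div_eq_mul_div, pow_mul, mul_comm ((d.factorial : ℝ)) _]
      have hheat : heatK d s x ≤ (2*π)^e * (2^d * d.factorial / ‖x‖^(2*d)) := by
        unfold heatK
        rw [← he, Real.mul_rpow (by positivity) hs0.le]
        calc (2*π)^e * s^e * Real.exp (-‖x‖ ^ 2 / (2 * s))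
            ≤ (2*π)^e * s^e * (d.factorial * (2*s)^d / ‖x‖^(2*d)) := by
              apply mul_le_mul_of_nonneg_left h1 (by positivity)
            _ = (2*π)^e * (2^d * d.factorial / ‖x‖^(2*d)) * (s^e * s^(d:ℝ)) := by
              rw [mul_pow, Real.rpow_natCast]
              ring
            _ ≤ (2*π)^e * (2^d * d.factorial / ‖x‖^(2*d)) * 1 := by
              apply mul_le_mul_of_nonneg_left _ (by positivity)
              rw [← Real.rpow_add hs0]
              apply Real.rpow_le_one hs0.le hs.2
              rw [he]; push_cast; linarith [Nat.cast_nonneg (α := ℝ) d]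
            _ = _ := mul_one _
      have hg : gK t s ≤ (2*π*t)^(-(1:ℝ)/2) := by
        unfold gK
        nth_rewrite 2 [← mul_one ((2*π*t)^(-(1:ℝ)/2))]
        apply mul_le_mul_of_nonneg_left _ (by positivity)
        rw [Real.exp_le_one_iff]
        have : (0:ℝ) ≤ s^2/(2*t) := by positivity
        rw [neg_div]; linarith
      rw [Real.norm_eq_abs, abs_of_nonneg (by unfold heatK gK; positivity)]
      have h0 : 0 ≤ heatK d s x := heatK_nonneg d hs0.le x
      exact mul_le_mul hheat hg (gK_nonneg ht s) (by positivity)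
  · apply MeasureTheory.Integrable.mono'
      (g := fun s => (2*π)^e * ((2*π*t)^(-(1:ℝ)/2) * Real.exp (-(1/(2*t)) * s^2)))
    · apply Integrable.integrableOn
      exact (((integrable_exp_neg_mul_sq (by positivity)).const_mul _).const_mul _)
    · exact hmble.aestronglyMeasurable.restrict
    · filter_upwards [ae_restrict_mem measurableSet_Ioi] with s hs
      have hs1 : (1:ℝ) < s := hs
      have hs0 : (0:ℝ) < s := by linarith
      rw [Real.norm_eq_abs, abs_of_nonneg (by unfold heatK gK; positivity)]
      have hheat : heatK d s x ≤ (2*π)^e := by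
        unfold heatK
        rw [← he]
        calc (2*π*s)^e * Real.exp (-‖x‖ ^ 2 / (2 * s)) ≤ (2*π*s)^e * 1 := by
              apply mul_le_mul_of_nonneg_left _ (by positivity)
              rw [Real.exp_le_one_iff, neg_div]
              have : (0:ℝ) ≤ ‖x‖^2/(2*s) := by positivity
              linarith
          _ = (2*π*s)^e := mul_one _
          _ ≤ (2*π)^e := by
              refine Real.rpow_le_rpow_of_nonpos (by positivity) (by nlinarith [pi_pos]) ?_
              rw [he]
              have : (0:ℝ) ≤ (d:ℝ) := Nat.cast_nonneg d
              linarith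
      have hgeq : gK t s = (2*π*t)^(-(1:ℝ)/2) * Real.exp (-(1/(2*t)) * s^2) := by
        unfold gK; congr 2; field_simp
      rw [hgeq]
      have h2 : (0:ℝ) ≤ (2*π*t)^(-(1:ℝ)/2) * Real.exp (-(1/(2*t)) * s^2) := by positivity
      exact mul_le_mul_of_nonneg_right hheat h2

lemma btbmK_nonneg (d : ℕ) {t : ℝ} (ht : 0 < t) (x : EuclideanSpace ℝ (Fin d)) :
    0 ≤ btbmK d t x := by
  rw [btbmK_eq]
  apply mul_nonneg (by norm_num)
  apply setIntegral_nonneg measurableSet_Ioi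
  intro s hs
  exact mul_nonneg (heatK_nonneg d (le_of_lt hs) x) (gK_nonneg ht s)

lemma btbmK_pos (d : ℕ) {t : ℝ} (ht : 0 < t) {x : EuclideanSpace ℝ (Fin d)} (hx : x ≠ 0) :
    0 < btbmK d t x := by
  rw [btbmK_eq]
  apply mul_pos (by norm_num)
  rw [setIntegral_pos_iff_support_of_nonneg_ae ?h1 (integrableOn_s d ht hx)]
  case h1 =>
    filter_upwards [ae_restrict_mem measurableSet_Ioi] with s hs
    exact mul_nonneg (heatK_nonneg d (le_of_lt hs) x) (gK_nonneg ht s)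
  have hsub : Set.Ioi (0:ℝ) ⊆ Function.support (fun s => heatK d s x * gK t s) ∩ Set.Ioi 0 := by
    intro s hs
    refine ⟨?_, hs⟩
    exact ne_of_gt (mul_pos (heatK_pos d hs x) (gK_pos ht s))
  calc (0:ENNReal) < volume (Set.Ioi (0:ℝ)) := by rw [Real.volume_Ioi]; norm_num
    _ ≤ _ := measure_mono hsub

lemma ofReal_btbmK (d : ℕ) {t : ℝ} (ht : 0 < t) {x : EuclideanSpace ℝ (Fin d)} (hx : x ≠ 0) :
    ENNReal.ofReal (btbmK d t x)
      = 2 * ∫⁻ s in Set.Ioi (0:ℝ), ENNReal.ofReal (heatK d s x * gK t s) := by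
  rw [btbmK_eq, ENNReal.ofReal_mul (by norm_num : (0:ℝ) ≤ 2)]
  rw [MeasureTheory.ofReal_integral_eq_lintegral_ofReal (integrableOn_s d ht hx) ?h1]
  · norm_num
  case h1 =>
    filter_upwards [ae_restrict_mem measurableSet_Ioi] with s hs
    exact mul_nonneg (heatK_nonneg d (le_of_lt hs) x) (gK_nonneg ht s)

lemma integrable_rexp_gauss {b : ℝ} (hb : 0 < b) (d : ℕ) :
    Integrable (fun v : EuclideanSpace ℝ (Fin d) => Real.exp (-b * ‖v‖^2)) := by
  have h := (GaussianFourier.integrable_cexp_neg_mul_sq_norm_add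
    (V := EuclideanSpace ℝ (Fin d)) (b := (b:ℂ)) (by simpa using hb) 0 0).norm
  apply h.congr
  filter_upwards with v
  simp [Complex.norm_exp, ← Complex.ofReal_pow]

lemma lintegral_heatK_mul (d : ℕ) {s s' : ℝ} (hs : 0 < s) (hs' : 0 < s') :
    ∫⁻ x : EuclideanSpace ℝ (Fin d), ENNReal.ofReal (heatK d s x * heatK d s' x)
      = ENNReal.ofReal ((2*π*(s+s'))^(-(d:ℝ)/2)) := by
  set e : ℝ := -(d:ℝ)/2 with he
  set b : ℝ := (s+s')/(2*s*s') with hb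
  have hbpos : 0 < b := by positivity
  have hpt : ∀ x : EuclideanSpace ℝ (Fin d), heatK d s x * heatK d s' x
      = ((2*π*s)^e * (2*π*s')^e) * Real.exp (-b * ‖x‖^2) := by
    intro x
    unfold heatK
    rw [← he, mul_mul_mul_comm, ← Real.exp_add]
    congr 1
    rw [hb]
    field_simp
    ring
  simp_rw [hpt]
  have hc : (0:ℝ) ≤ (2*π*s)^e * (2*π*s')^e := by positivity
  simp_rw [ENNReal.ofReal_mul hc]
  rw [lintegral_const_mul' _ _ ENNReal.ofReal_ne_top]
  rw [← MeasureTheory.ofReal_integral_eq_lintegral_ofReal (integrable_rexp_gauss hbpos d)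
    (Filter.Eventually.of_forall fun v => (Real.exp_pos _).le)]
  rw [GaussianFourier.integral_rexp_neg_mul_sq_norm hbpos, ← ENNReal.ofReal_mul hc]
  congr 1
  rw [finrank_euclideanSpace_fin]
  have hπb : (π / b) ^ ((d:ℝ) / 2) = (b/π) ^ e := by
    rw [he, neg_div, Real.rpow_neg (by positivity), ← Real.inv_rpow (by positivity), inv_div]
  rw [hπb, ← Real.mul_rpow (by positivity) (by positivity),
    ← Real.mul_rpow (by positivity) (by positivity)]
  congr 1
  rw [hb]
  field_simp

lemma nontrivial_E {d : ℕ} (hd : 1 ≤ d) : Nontrivial (EuclideanSpace ℝ (Fin d)) := by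
  refine nontrivial_of_ne (EuclideanSpace.single ⟨0, hd⟩ 1) 0 ?_
  intro h
  have := congrArg norm h
  rw [EuclideanSpace.norm_single] at this
  simp at this

lemma ae_ne_zero {d : ℕ} (hd : 1 ≤ d) :
    ∀ᵐ x : EuclideanSpace ℝ (Fin d), x ≠ 0 := by
  haveI := nontrivial_E hd
  have h0 : volume ({0} : Set (EuclideanSpace ℝ (Fin d))) = 0 := measure_singleton 0
  rw [ae_iff]
  convert h0 using 2
  ext x; simp

set_option maxHeartbeats 1000000 in
lemma lintegral_sq (d : ℕ) (hd : 1 ≤ d) {t : ℝ} (ht : 0 < t) :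
    ∫⁻ x : EuclideanSpace ℝ (Fin d), ENNReal.ofReal ((btbmK d t x)^2)
      = 4 * ∫⁻ s in Set.Ioi (0:ℝ), ∫⁻ s' in Set.Ioi (0:ℝ),
          ENNReal.ofReal ((2*π*(s+s'))^(-(d:ℝ)/2)) *
            (ENNReal.ofReal (gK t s) * ENNReal.ofReal (gK t s')) := by
  set F : ℝ → EuclideanSpace ℝ (Fin d) → ENNReal :=
    fun s x => ENNReal.ofReal (heatK d s x * gK t s) with hF
  set L : EuclideanSpace ℝ (Fin d) → ENNReal :=
    fun x => ∫⁻ s in Set.Ioi (0:ℝ), F s x with hL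
  have hFm : Measurable (fun p : (EuclideanSpace ℝ (Fin d)) × ℝ => F p.2 p.1) := by
    apply Measurable.ennreal_ofReal
    exact (measurable_heatK_gK d t).comp measurable_swap
  have hLm : Measurable L :=
    Measurable.lintegral_prod_right'
      (f := fun p : (EuclideanSpace ℝ (Fin d)) × ℝ => F p.2 p.1) hFm
  -- step A
  have hstepA : ∫⁻ x : EuclideanSpace ℝ (Fin d), ENNReal.ofReal ((btbmK d t x)^2)
      = 4 * ∫⁻ x : EuclideanSpace ℝ (Fin d), L x * L x := by
    rw [← lintegral_const_mul' _ _ (by norm_num : (4:ENNReal) ≠ ⊤)]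
    apply lintegral_congr_ae
    filter_upwards [ae_ne_zero hd] with x hx
    rw [ENNReal.ofReal_pow (btbmK_nonneg d ht x), ofReal_btbmK d ht hx]
    have hLx : (∫⁻ s in Set.Ioi (0:ℝ), ENNReal.ofReal (heatK d s x * gK t s)) = L x := rfl
    rw [hLx]
    ring
  rw [hstepA]
  congr 1
  have h1 : ∀ x : EuclideanSpace ℝ (Fin d),
      L x * L x = ∫⁻ s in Set.Ioi (0:ℝ), F s x * L x := fun x =>
    (lintegral_mul_const'' _ ((hFm.comp (measurable_const.prodMk measurable_id)).aemeasurable)).symm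
  simp_rw [h1]
  have hswap1 : ∫⁻ x : EuclideanSpace ℝ (Fin d), ∫⁻ s in Set.Ioi (0:ℝ), F s x * L x
      = ∫⁻ s in Set.Ioi (0:ℝ), ∫⁻ x : EuclideanSpace ℝ (Fin d), F s x * L x :=
    lintegral_lintegral_swap (hFm.mul (hLm.comp measurable_fst)).aemeasurable
  rw [hswap1]
  apply setLIntegral_congr_fun measurableSet_Ioi
  intro s hs
  have h2 : ∀ x : EuclideanSpace ℝ (Fin d),
      F s x * L x = ∫⁻ s' in Set.Ioi (0:ℝ), F s x * F s' x := fun x =>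
    (lintegral_const_mul' _ _ ENNReal.ofReal_ne_top).symm
  simp_rw [h2]
  have hswap2 : ∫⁻ x : EuclideanSpace ℝ (Fin d), ∫⁻ s' in Set.Ioi (0:ℝ), F s x * F s' x
      = ∫⁻ s' in Set.Ioi (0:ℝ), ∫⁻ x : EuclideanSpace ℝ (Fin d), F s x * F s' x :=
    lintegral_lintegral_swap
      (((hFm.comp (measurable_fst.prodMk measurable_const))).mul hFm).aemeasurable
  rw [hswap2]
  apply setLIntegral_congr_fun measurableSet_Ioi
  intro s' hs'
  have hpt : ∀ x : EuclideanSpace ℝ (Fin d), F s x * F s' x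
      = ENNReal.ofReal (heatK d s x * heatK d s' x) *
          (ENNReal.ofReal (gK t s) * ENNReal.ofReal (gK t s')) := by
    intro x
    rw [hF]
    simp only []
    rw [ENNReal.ofReal_mul (heatK_nonneg d (le_of_lt hs) x),
        ENNReal.ofReal_mul (heatK_nonneg d (le_of_lt hs') x),
        ENNReal.ofReal_mul (heatK_nonneg d (le_of_lt hs) x)]
    ring
  simp_rw [hpt]
  rw [lintegral_mul_const' _ _ (ENNReal.mul_ne_top ENNReal.ofReal_ne_top ENNReal.ofReal_ne_top)]
  rw [lintegral_heatK_mul d hs hs']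

lemma lintegral_ofReal_lt_top_of_integrableOn {f : ℝ → ℝ} {S : Set ℝ}
    (hf : IntegrableOn f S) : ∫⁻ s in S, ENNReal.ofReal (f s) < ⊤ := by
  calc ∫⁻ s in S, ENNReal.ofReal (f s) ≤ ∫⁻ s in S, (‖f s‖₊ : ENNReal) :=
        lintegral_mono fun a => Real.ofReal_le_enorm (f a)
    _ < ⊤ := hf.2

lemma lintegral_ofReal_eq_top {f : ℝ → ℝ} {S : Set ℝ} (hS : MeasurableSet S)
    (hm : Measurable f) (hnonneg : ∀ s ∈ S, 0 ≤ f s) (hni : ¬ IntegrableOn f S) :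
    ∫⁻ s in S, ENNReal.ofReal (f s) = ⊤ := by
  by_contra h
  apply hni
  refine ⟨hm.aestronglyMeasurable, ?_⟩
  rw [HasFiniteIntegral]
  have hae : ∀ᵐ s ∂(volume.restrict S), ‖f s‖ₑ = ENNReal.ofReal (f s) := by
    filter_upwards [ae_restrict_mem hS] with s hs
    rw [Real.enorm_eq_ofReal (hnonneg s hs)]
  rw [lintegral_congr_ae hae]
  exact lt_top_iff_ne_top.2 h

lemma double_top (d : ℕ) (hd : 4 ≤ d) {t : ℝ} (ht : 0 < t) :
    ∫⁻ s in Set.Ioi (0:ℝ), ∫⁻ s' in Set.Ioi (0:ℝ),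
        ENNReal.ofReal ((2*π*(s+s'))^(-(d:ℝ)/2)) *
          (ENNReal.ofReal (gK t s) * ENNReal.ofReal (gK t s')) = ⊤ := by
  set e : ℝ := -(d:ℝ)/2 with he
  set c : ℝ := (2*π*t)^(-(1:ℝ)/2) * Real.exp (-1/(2*t)) with hc
  have hcpos : 0 < c := by rw [hc]; positivity
  have hgc : ∀ s : ℝ, s ∈ Set.Ioc (0:ℝ) 1 → c ≤ gK t s := by
    intro s hs
    rw [hc]
    unfold gK
    apply mul_le_mul_of_nonneg_left _ (by positivity)
    apply Real.exp_le_exp.2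
    rw [neg_div, neg_div, neg_le_neg_iff, div_le_div_iff_of_pos_right (by positivity)]
    nlinarith [hs.1, hs.2]
  rw [eq_top_iff]
  calc (⊤:ENNReal) = ENNReal.ofReal ((4*π)^e * (c*c)) *
        ∫⁻ s in Set.Ioc (0:ℝ) 1, ENNReal.ofReal (s^(e+1)) := by
        rw [lintegral_ofReal_eq_top measurableSet_Ioc (by fun_prop)
          (fun s hs => Real.rpow_nonneg hs.1.le _) ?hni]
        · rw [ENNReal.mul_top (by positivity)]
        case hni =>
          intro hint
          have h2 : IntegrableOn (fun s : ℝ => s^(e+1)) (Set.Ioo (0:ℝ) 1) :=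
            hint.mono_set Set.Ioo_subset_Ioc_self
          rw [intervalIntegral.integrableOn_Ioo_rpow_iff zero_lt_one] at h2
          have : (4:ℝ) ≤ (d:ℝ) := by exact_mod_cast hd
          rw [he] at h2
          linarith
    _ = ∫⁻ s in Set.Ioc (0:ℝ) 1, ENNReal.ofReal ((4*π)^e * (c*c)) * ENNReal.ofReal (s^(e+1)) := by
        rw [lintegral_const_mul' _ _ ENNReal.ofReal_ne_top]
    _ ≤ ∫⁻ s in Set.Ioc (0:ℝ) 1, ∫⁻ s' in Set.Ioi (0:ℝ),
          ENNReal.ofReal ((2*π*(s+s'))^e) *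
            (ENNReal.ofReal (gK t s) * ENNReal.ofReal (gK t s')) := by
        apply lintegral_mono_ae
        filter_upwards [ae_restrict_mem measurableSet_Ioc] with s hs
        have hs0 : 0 < s := hs.1
        calc ENNReal.ofReal ((4*π)^e * (c*c)) * ENNReal.ofReal (s^(e+1))
            = ENNReal.ofReal ((2*π*(2*s))^e * (c*c)) * volume (Set.Ioc (0:ℝ) s) := by
              rw [Real.volume_Ioc, sub_zero,
                ← ENNReal.ofReal_mul (by positivity),
                ← ENNReal.ofReal_mul (by positivity)]
              congr 1
              rw [show 2*π*(2*s) = (4*π)*s by ring,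
                Real.mul_rpow (by positivity) hs0.le,
                Real.rpow_add_one hs0.ne']
              ring
          _ = ∫⁻ s' in Set.Ioc (0:ℝ) s, ENNReal.ofReal ((2*π*(2*s))^e * (c*c)) := by
              rw [setLIntegral_const]
          _ ≤ ∫⁻ s' in Set.Ioc (0:ℝ) s, ENNReal.ofReal ((2*π*(s+s'))^e) *
                (ENNReal.ofReal (gK t s) * ENNReal.ofReal (gK t s')) := by
              apply lintegral_mono_ae
              filter_upwards [ae_restrict_mem measurableSet_Ioc] with s' hs'
              have hs'0 : 0 < s' := hs'.1
              have hbase1 : (0:ℝ) < 2*π*(s+s') := by positivity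
              have hbase2 : (0:ℝ) < 2*π*(2*s) := by positivity
              have hrw : ENNReal.ofReal ((2*π*(s+s'))^e) *
                  (ENNReal.ofReal (gK t s) * ENNReal.ofReal (gK t s'))
                  = ENNReal.ofReal ((2*π*(s+s'))^e * (gK t s * gK t s')) := by
                rw [ENNReal.ofReal_mul (Real.rpow_nonneg hbase1.le e),
                  ENNReal.ofReal_mul (gK_nonneg ht s)]
              rw [hrw]
              apply ENNReal.ofReal_le_ofReal
              have hb1 : (2*π*(2*s))^e ≤ (2*π*(s+s'))^e := by
                refine Real.rpow_le_rpow_of_nonpos hbase1 (by nlinarith [pi_pos, hs'.1, hs'.2]) ?_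
                rw [he]
                have : (0:ℝ) ≤ (d:ℝ) := Nat.cast_nonneg d
                linarith
              have hb2 : c * c ≤ gK t s * gK t s' :=
                mul_le_mul (hgc s hs) (hgc s' ⟨hs'.1, hs'.2.trans hs.2⟩) hcpos.le
                  (gK_nonneg ht s)
              exact mul_le_mul hb1 hb2 (mul_nonneg hcpos.le hcpos.le) (Real.rpow_nonneg hbase1.le e)
          _ ≤ _ := lintegral_mono_set Set.Ioc_subset_Ioi_self
    _ ≤ _ := lintegral_mono_set Set.Ioc_subset_Ioi_self

set_option maxHeartbeats 800000 in
lemma double_lt_top (d : ℕ) (hd1 : 1 ≤ d) (hd3 : d ≤ 3) {t : ℝ} (ht : 0 < t) :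
    ∫⁻ s in Set.Ioi (0:ℝ), ∫⁻ s' in Set.Ioi (0:ℝ),
        ENNReal.ofReal ((2*π*(s+s'))^(-(d:ℝ)/2)) *
          (ENNReal.ofReal (gK t s) * ENNReal.ofReal (gK t s')) < ⊤ := by
  set e : ℝ := -(d:ℝ)/2 with he
  set q : ℝ := -(d:ℝ)/4 with hq
  have hd3' : (d:ℝ) ≤ 3 := by exact_mod_cast hd3
  have hdpos : (0:ℝ) ≤ (d:ℝ) := Nat.cast_nonneg d
  set U : ℝ → ENNReal := fun s => ENNReal.ofReal (s^q * gK t s) with hU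
  -- I := ∫ U < ∞
  have hI : ∫⁻ s in Set.Ioi (0:ℝ), U s < ⊤ := by
    calc ∫⁻ s in Set.Ioi (0:ℝ), U s
        ≤ (∫⁻ s in Set.Ioc (0:ℝ) 1, U s) + ∫⁻ s in Set.Ioi (1:ℝ), U s := by
          rw [show Set.Ioi (0:ℝ) = Set.Ioc 0 1 ∪ Set.Ioi 1 from
            (Set.Ioc_union_Ioi_eq_Ioi zero_le_one).symm]
          exact lintegral_union_le _ _ _
      _ < ⊤ := by
          apply ENNReal.add_lt_top.2
          constructor
          · calc ∫⁻ s in Set.Ioc (0:ℝ) 1, U s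
                ≤ ∫⁻ s in Set.Ioc (0:ℝ) 1, ENNReal.ofReal ((2*π*t)^(-(1:ℝ)/2) * s^q) := by
                  apply lintegral_mono_ae
                  filter_upwards [ae_restrict_mem measurableSet_Ioc] with s hs
                  apply ENNReal.ofReal_le_ofReal
                  rw [mul_comm ((2*π*t)^(-(1:ℝ)/2)) (s^q)]
                  apply mul_le_mul_of_nonneg_left _ (Real.rpow_nonneg hs.1.le q)
                  unfold gK
                  nth_rewrite 2 [← mul_one ((2*π*t)^(-(1:ℝ)/2))]
                  apply mul_le_mul_of_nonneg_left _ (by positivity)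
                  rw [Real.exp_le_one_iff, neg_div]
                  have : (0:ℝ) ≤ s^2/(2*t) := by positivity
                  linarith
              _ < ⊤ := by
                  apply lintegral_ofReal_lt_top_of_integrableOn
                  apply Integrable.const_mul
                  have hIoc : IntegrableOn (fun x : ℝ => x ^ q) (Set.Ioc 0 1) := by
                    rw [integrableOn_Ioc_iff_integrableOn_Ioo,
                      intervalIntegral.integrableOn_Ioo_rpow_iff zero_lt_one, hq]
                    linarith
                  exact hIoc
          · calc ∫⁻ s in Set.Ioi (1:ℝ), U s
                ≤ ∫⁻ s in Set.Ioi (1:ℝ), ENNReal.ofReal ((2*π*t)^(-(1:ℝ)/2) *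
                    Real.exp (-(1/(2*t)) * s^2)) := by
                  apply lintegral_mono_ae
                  filter_upwards [ae_restrict_mem measurableSet_Ioi] with s hs
                  apply ENNReal.ofReal_le_ofReal
                  have hs1 : (1:ℝ) ≤ s := le_of_lt hs
                  have hgeq : gK t s = (2*π*t)^(-(1:ℝ)/2) * Real.exp (-(1/(2*t)) * s^2) := by
                    unfold gK; congr 2; field_simp
                  calc s^q * gK t s ≤ 1 * gK t s := by
                        apply mul_le_mul_of_nonneg_right _ (gK_nonneg ht s)
                        apply Real.rpow_le_one_of_one_le_of_nonpos hs1
                        rw [hq]; linarith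
                    _ = (2*π*t)^(-(1:ℝ)/2) * Real.exp (-(1/(2*t)) * s^2) := by
                        rw [one_mul, hgeq]
              _ < ⊤ := by
                  apply lintegral_ofReal_lt_top_of_integrableOn
                  apply Integrable.integrableOn
                  exact (integrable_exp_neg_mul_sq (by positivity)).const_mul _
  -- pointwise bound and assembly
  have hk : (0:ℝ) ≤ (2*π)^e := by positivity
  calc ∫⁻ s in Set.Ioi (0:ℝ), ∫⁻ s' in Set.Ioi (0:ℝ),
        ENNReal.ofReal ((2*π*(s+s'))^e) *
          (ENNReal.ofReal (gK t s) * ENNReal.ofReal (gK t s'))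
      ≤ ∫⁻ s in Set.Ioi (0:ℝ), ∫⁻ s' in Set.Ioi (0:ℝ),
          (ENNReal.ofReal ((2*π)^e) * U s) * U s' := by
        apply lintegral_mono_ae
        filter_upwards [ae_restrict_mem measurableSet_Ioi] with s hs
        apply lintegral_mono_ae
        filter_upwards [ae_restrict_mem measurableSet_Ioi] with s' hs'
        have hs0 : (0:ℝ) < s := hs
        have hs'0 : (0:ℝ) < s' := hs'
        have key : (2*π*(s+s'))^e ≤ (2*π)^e * (s^q * s'^q) := by
          have hsq : 2*π*(Real.sqrt s * Real.sqrt s') ≤ 2*π*(s+s') := by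
            have h1 : Real.sqrt s * Real.sqrt s' ≤ s + s' := by
              nlinarith [Real.sq_sqrt hs0.le, Real.sq_sqrt hs'0.le,
                Real.sqrt_nonneg s, Real.sqrt_nonneg s',
                sq_nonneg (Real.sqrt s - Real.sqrt s')]
            nlinarith [pi_pos]
          have h2 : (2*π*(s+s'))^e ≤ (2*π*(Real.sqrt s * Real.sqrt s'))^e := by
            apply Real.rpow_le_rpow_of_nonpos (by positivity) hsq
            rw [he]; linarith
          refine h2.trans (le_of_eq ?_)
          rw [Real.mul_rpow (by positivity) (by positivity),
            Real.mul_rpow (Real.sqrt_nonneg s) (Real.sqrt_nonneg s'),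
            Real.sqrt_eq_rpow, Real.sqrt_eq_rpow,
            ← Real.rpow_mul hs0.le, ← Real.rpow_mul hs'0.le]
          rw [show (1/2) * e = q by rw [he, hq]; ring]
        calc ENNReal.ofReal ((2*π*(s+s'))^e) *
              (ENNReal.ofReal (gK t s) * ENNReal.ofReal (gK t s'))
            ≤ ENNReal.ofReal ((2*π)^e * (s^q * s'^q)) *
              (ENNReal.ofReal (gK t s) * ENNReal.ofReal (gK t s')) := by
              exact mul_le_mul' (ENNReal.ofReal_le_ofReal key) le_rfl
          _ = (ENNReal.ofReal ((2*π)^e) * U s) * U s' := by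
              simp only [hU]
              rw [ENNReal.ofReal_mul hk, ENNReal.ofReal_mul (Real.rpow_nonneg hs0.le q),
                ENNReal.ofReal_mul (Real.rpow_nonneg hs0.le q),
                ENNReal.ofReal_mul (Real.rpow_nonneg hs'0.le q)]
              ring
    _ = (ENNReal.ofReal ((2*π)^e) * (∫⁻ s in Set.Ioi (0:ℝ), U s)) *
          (∫⁻ s in Set.Ioi (0:ℝ), U s) := by
        have hin : ∀ s : ℝ, ∫⁻ s' in Set.Ioi (0:ℝ), (ENNReal.ofReal ((2*π)^e) * U s) * U s'
            = (ENNReal.ofReal ((2*π)^e) * U s) * ∫⁻ s' in Set.Ioi (0:ℝ), U s' := fun s =>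
          lintegral_const_mul' _ _ (ENNReal.mul_ne_top ENNReal.ofReal_ne_top ENNReal.ofReal_ne_top)
        simp_rw [hin]
        have : ∀ s : ℝ, (ENNReal.ofReal ((2*π)^e) * U s) * (∫⁻ s' in Set.Ioi (0:ℝ), U s')
            = (ENNReal.ofReal ((2*π)^e) * (∫⁻ s' in Set.Ioi (0:ℝ), U s')) * U s := by
          intro s; ring
        simp_rw [this]
        rw [lintegral_const_mul' _ _ (ENNReal.mul_ne_top ENNReal.ofReal_ne_top hI.ne)]
    _ < ⊤ := by
        apply ENNReal.mul_lt_top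
        · exact ENNReal.mul_lt_top ENNReal.ofReal_lt_top hI
        · exact hI

lemma stronglyMeasurable_btbmK (d : ℕ) (t : ℝ) :
    StronglyMeasurable (fun x : EuclideanSpace ℝ (Fin d) => btbmK d t x) := by
  have h : StronglyMeasurable (fun x : EuclideanSpace ℝ (Fin d) =>
      ∫ s in Set.Ioi (0:ℝ), heatK d s x * gK t s) := by
    apply MeasureTheory.StronglyMeasurable.integral_prod_right
      (f := fun (x : EuclideanSpace ℝ (Fin d)) (s : ℝ) => heatK d s x * gK t s)
    exact ((measurable_heatK_gK d t).comp measurable_swap).stronglyMeasurable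
  have : (fun x : EuclideanSpace ℝ (Fin d) => btbmK d t x)
      = fun x => 2 * ∫ s in Set.Ioi (0:ℝ), heatK d s x * gK t s := by
    funext x; rw [btbmK_eq]
  rw [this]
  exact stronglyMeasurable_const.mul h

lemma lintegral_sq_pos (d : ℕ) (hd1 : 1 ≤ d) :
    0 < ∫⁻ x : EuclideanSpace ℝ (Fin d), ENNReal.ofReal ((btbmK d 1 x)^2) := by
  rw [pos_iff_ne_zero]
  intro h
  have hm : Measurable (fun x : EuclideanSpace ℝ (Fin d) => ENNReal.ofReal ((btbmK d 1 x)^2)) :=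
    (((stronglyMeasurable_btbmK d 1).measurable).pow_const 2).ennreal_ofReal
  rw [lintegral_eq_zero_iff hm] at h
  have hcomb := h.and (ae_ne_zero hd1)
  have hne : (volume : Measure (EuclideanSpace ℝ (Fin d))) ≠ 0 := by
    intro h0
    have := isOpen_univ.measure_ne_zero (volume : Measure (EuclideanSpace ℝ (Fin d)))
      Set.univ_nonempty
    rw [h0] at this
    simp at this
  haveI : (MeasureTheory.ae (volume : Measure (EuclideanSpace ℝ (Fin d)))).NeBot :=
    MeasureTheory.ae_neBot.2 hne
  obtain ⟨x, hx1, hx2⟩ := hcomb.exists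
  have hpos : 0 < btbmK d 1 x := btbmK_pos d one_pos hx2
  simp only [Pi.zero_apply, ENNReal.ofReal_eq_zero] at hx1
  nlinarith

lemma integrable_sq (d : ℕ) (hd1 : 1 ≤ d) (hd3 : d ≤ 3) :
    Integrable (fun x : EuclideanSpace ℝ (Fin d) => (btbmK d 1 x)^2) := by
  refine ⟨(((stronglyMeasurable_btbmK d 1).measurable).pow_const 2).aestronglyMeasurable, ?_⟩
  rw [HasFiniteIntegral]
  have hae : ∀ᵐ x : EuclideanSpace ℝ (Fin d) ∂volume,
      ‖(btbmK d 1 x)^2‖ₑ = ENNReal.ofReal ((btbmK d 1 x)^2) := by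
    filter_upwards with x
    rw [Real.enorm_eq_ofReal (sq_nonneg _)]
  rw [lintegral_congr_ae hae, lintegral_sq d hd1 one_pos]
  exact ENNReal.mul_lt_top (by norm_num) (double_lt_top d hd1 hd3 one_pos)

lemma btbm_scale (d : ℕ) {t : ℝ} (ht : 0 < t) (y : EuclideanSpace ℝ (Fin d)) :
    btbmK d t ((t ^ ((1:ℝ)/4)) • y) = t ^ (-(d:ℝ)/4) * btbmK d 1 y := by
  set c : ℝ := t ^ ((1:ℝ)/4) with hcdef
  set b : ℝ := t ^ ((1:ℝ)/2) with hbdef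
  have hcpos : 0 < c := Real.rpow_pos_of_pos ht _
  have hbpos : 0 < b := Real.rpow_pos_of_pos ht _
  have hc2 : c^2 = b := by
    rw [hcdef, hbdef, ← Real.rpow_natCast (t ^ ((1:ℝ)/4)) 2, ← Real.rpow_mul ht.le]
    norm_num
  have hb2 : b^2 = t := by
    rw [hbdef, ← Real.rpow_natCast (t ^ ((1:ℝ)/2)) 2, ← Real.rpow_mul ht.le]
    norm_num
  rw [btbmK_eq, btbmK_eq]
  have hcomp := MeasureTheory.integral_comp_mul_left_Ioi
    (fun s => heatK d s (c • y) * gK t s) 0 hbpos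
  rw [mul_zero] at hcomp
  have h2 : (∫ s in Set.Ioi (0:ℝ), heatK d s (c • y) * gK t s)
      = b * ∫ σ in Set.Ioi (0:ℝ), heatK d (b * σ) (c • y) * gK t (b * σ) := by
    rw [hcomp, smul_eq_mul, ← mul_assoc, mul_inv_cancel₀ hbpos.ne', one_mul]
  rw [h2]
  have hpt : ∀ σ ∈ Set.Ioi (0:ℝ), heatK d (b * σ) (c • y) * gK t (b * σ)
      = (t ^ (-(d:ℝ)/4) * t ^ (-(1:ℝ)/2)) * (heatK d σ y * gK 1 σ) := by
    intro σ hσ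
    have hσ0 : (0:ℝ) < σ := hσ
    have hnorm : ‖c • y‖^2 = b * ‖y‖^2 := by
      rw [norm_smul, Real.norm_eq_abs, abs_of_pos hcpos, mul_pow, hc2]
    have hheat : heatK d (b * σ) (c • y) = t ^ (-(d:ℝ)/4) * heatK d σ y := by
      unfold heatK
      rw [hnorm]
      have h1 : (2*π*(b*σ)) ^ (-(d:ℝ)/2) = b ^ (-(d:ℝ)/2) * (2*π*σ) ^ (-(d:ℝ)/2) := by
        rw [show 2*π*(b*σ) = b * (2*π*σ) by ring,
          Real.mul_rpow hbpos.le (by positivity)]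
      have h2' : b ^ (-(d:ℝ)/2) = t ^ (-(d:ℝ)/4) := by
        rw [hbdef, ← Real.rpow_mul ht.le, show (1:ℝ)/2 * (-(d:ℝ)/2) = -(d:ℝ)/4 by ring]
      have h3 : -(b * ‖y‖^2) / (2*(b*σ)) = -‖y‖^2/(2*σ) := by
        field_simp
      rw [h1, h2', h3]
      ring
    have hg : gK t (b * σ) = t ^ (-(1:ℝ)/2) * gK 1 σ := by
      unfold gK
      have h1 : (2*π*t) ^ (-(1:ℝ)/2) = t ^ (-(1:ℝ)/2) * (2*π*1) ^ (-(1:ℝ)/2) := by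
        rw [show 2*π*t = t * (2*π*1) by ring, Real.mul_rpow ht.le (by positivity)]
      have h3 : -(b*σ)^2/(2*t) = -σ^2/(2*1) := by
        rw [mul_pow, hb2]
        field_simp
      rw [h1, h3]
      ring
    rw [hheat, hg]
    ring
  rw [MeasureTheory.setIntegral_congr_fun measurableSet_Ioi hpt]
  rw [MeasureTheory.integral_const_mul]
  have hbt : b * (t ^ (-(d:ℝ)/4) * t ^ (-(1:ℝ)/2)) = t ^ (-(d:ℝ)/4) := by
    rw [hbdef, mul_comm (t ^ (-(d:ℝ)/4)) (t ^ (-(1:ℝ)/2)), ← mul_assoc,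
      ← Real.rpow_add ht]
    norm_num
  rw [← mul_assoc, mul_comm (2:ℝ) b]
  linear_combination (2 * (∫ a in Set.Ioi (0:ℝ), heatK d a y * gK 1 a)) * hbt

end BTBM2

open BTBM BTBM2 in
theorem btbm_kernel_L2_norm (d : ℕ) :
    (1 ≤ d → d ≤ 3 → ∃ C > (0 : ℝ), ∀ t > (0 : ℝ),
      ∫ x : EuclideanSpace ℝ (Fin d), (btbmK d t x) ^ 2 = C * t ^ (-(d : ℝ) / 4)) ∧
    (4 ≤ d → ∀ t > (0 : ℝ),
      ∫⁻ x : EuclideanSpace ℝ (Fin d), ENNReal.ofReal ((btbmK d t x) ^ 2) = ⊤) := by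
  constructor
  · intro hd1 hd3
    refine ⟨∫ x : EuclideanSpace ℝ (Fin d), (btbmK d 1 x)^2, ?_, ?_⟩
    · rw [integral_eq_lintegral_of_nonneg_ae (Filter.Eventually.of_forall fun x => sq_nonneg _)
        (((stronglyMeasurable_btbmK d 1).measurable).pow_const 2).aestronglyMeasurable]
      apply ENNReal.toReal_pos (lintegral_sq_pos d hd1).ne'
      rw [lintegral_sq d hd1 one_pos]
      exact (ENNReal.mul_lt_top (by norm_num) (double_lt_top d hd1 hd3 one_pos)).ne
    · intro t ht
      have hsc := Measure.integral_comp_smul (μ := volume)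
        (fun x : EuclideanSpace ℝ (Fin d) => (btbmK d t x)^2) (t ^ ((1:ℝ)/4))
      have hL : (∫ x : EuclideanSpace ℝ (Fin d), (btbmK d t ((t ^ ((1:ℝ)/4)) • x))^2)
          = (t ^ (-(d:ℝ)/4))^2 * ∫ x : EuclideanSpace ℝ (Fin d), (btbmK d 1 x)^2 := by
        simp_rw [btbm_scale d ht, mul_pow]
        rw [MeasureTheory.integral_const_mul]
      rw [hL, finrank_euclideanSpace_fin] at hsc
      have hRd : (t ^ ((1:ℝ)/4))^d = t ^ ((d:ℝ)/4) := by
        rw [← Real.rpow_natCast (t ^ ((1:ℝ)/4)) d, ← Real.rpow_mul ht.le]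
        congr 1; ring
      rw [hRd] at hsc
      have habs : |(t ^ ((d:ℝ)/4))⁻¹| = t ^ (-(d:ℝ)/4) := by
        rw [abs_of_pos (by positivity), ← Real.rpow_neg ht.le]
        congr 1; ring
      rw [habs, smul_eq_mul] at hsc
      have hpos : (0:ℝ) < t ^ (-(d:ℝ)/4) := Real.rpow_pos_of_pos ht _
      have hkey : t ^ (-(d:ℝ)/4) * (∫ x : EuclideanSpace ℝ (Fin d), (btbmK d t x)^2)
          = t ^ (-(d:ℝ)/4) * ((∫ x : EuclideanSpace ℝ (Fin d), (btbmK d 1 x)^2) * t ^ (-(d:ℝ)/4)) := by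
        rw [← hsc]
        ring
      exact mul_left_cancel₀ hpos.ne' hkey
  · intro hd4 t ht
    have hd1 : 1 ≤ d := by omega
    rw [lintegral_sq d hd1 ht, double_top d hd4 ht, ENNReal.mul_top (by norm_num)]
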